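/- For any positive integer a, ∫_{-∞}^{∞} τ(a, e^u, 2e^u)² du ≤ 4·(log 2)·W(a), where τ(a,y,z) counts divisors of a in (y,z] and W(a) counts pairs of divisors (d,d') of a with |log(d/d')| ≤ log 2. -/

import Mathlib

open MeasureTheory Real

noncomputable def tauI (a : ℕ) (y z : ℝ) : ℕ :=
  Set.ncard {d : ℕ | d ∣ a ∧ y < (d : ℝ) ∧ (d : ℝ) ≤ z}

noncomputable def W (a : ℕ) : ℕ :=
  Set.ncard {p : ℕ × ℕ | p.1 ∣ a ∧ p.2 ∣ a ∧ |Real.log p.1 - Real.log p.2| ≤ Real.log 2}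

theorem stmt6 (a : ℕ) (ha : 0 < a) :
    ∫ u : ℝ, ((tauI a (Real.exp u) (2 * Real.exp u) : ℝ)) ^ 2 ≤
      4 * Real.log 2 * (W a : ℝ) := by
  classical
  set D := a.divisors with hD
  have hlog2 : (0:ℝ) < Real.log 2 := Real.log_pos (by norm_num)
  set I : ℕ → Set ℝ := fun d => Set.Ico (Real.log d - Real.log 2) (Real.log d) with hI
  have hmem : ∀ (u : ℝ) (d : ℕ), 0 < d →
      (u ∈ I d ↔ (Real.exp u < (d:ℝ) ∧ (d:ℝ) ≤ 2 * Real.exp u)) := by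
    intro u d hd
    have hd' : (0:ℝ) < (d:ℝ) := by exact_mod_cast hd
    simp only [hI, Set.mem_Ico]
    constructor
    · rintro ⟨h1, h2⟩
      constructor
      · exact (Real.lt_log_iff_exp_lt hd').mp h2
      · have : Real.log d ≤ Real.log 2 + u := by linarith
        calc (d:ℝ) = Real.exp (Real.log d) := (Real.exp_log hd').symm
          _ ≤ Real.exp (Real.log 2 + u) := Real.exp_le_exp.mpr this
          _ = 2 * Real.exp u := by rw [Real.exp_add, Real.exp_log (by norm_num)]
    · rintro ⟨h1, h2⟩
      constructor
      · have : Real.log d ≤ Real.log (2 * Real.exp u) :=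
          Real.log_le_log hd' h2
        rw [Real.log_mul (by norm_num) (Real.exp_ne_zero u), Real.log_exp] at this
        linarith
      · exact (Real.lt_log_iff_exp_lt hd').mpr h1
  have hpoint : ∀ u : ℝ, ((tauI a (Real.exp u) (2 * Real.exp u) : ℝ)) ^ 2
      = ∑ p ∈ D ×ˢ D, Set.indicator (I p.1 ∩ I p.2) (fun _ => (1:ℝ)) u := by
    intro u
    have htau : tauI a (Real.exp u) (2 * Real.exp u)
        = (D.filter (fun d => u ∈ I d)).card := by
      rw [tauI]
      have : {d : ℕ | d ∣ a ∧ Real.exp u < (d:ℝ) ∧ (d:ℝ) ≤ 2 * Real.exp u}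
          = ↑(D.filter (fun d => u ∈ I d)) := by
        ext d
        simp only [Set.mem_setOf_eq, Finset.coe_filter, Nat.mem_divisors, hD]
        constructor
        · rintro ⟨hda, h1, h2⟩
          have hd : 0 < d := by
            rcases Nat.eq_zero_or_pos d with h | h
            · exfalso
              rw [h] at h1
              exact absurd h1 (by simpa using (Real.exp_pos u).le)
            · exact h
          exact ⟨⟨hda, ha.ne'⟩, (hmem u d hd).mpr ⟨h1, h2⟩⟩
        · rintro ⟨⟨hda, _⟩, hu⟩
          have hd : 0 < d := Nat.pos_of_dvd_of_pos hda ha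
          exact ⟨hda, (hmem u d hd).mp hu⟩
      rw [this, Set.ncard_coe_finset]
    rw [htau]
    have hsum : ∑ d ∈ D, Set.indicator (I d) (fun _ => (1:ℝ)) u
        = ((D.filter (fun d => u ∈ I d)).card : ℝ) := by
      rw [Finset.card_filter]
      push_cast
      refine Finset.sum_congr rfl fun d _ => ?_
      by_cases h : u ∈ I d <;> simp [Set.indicator_apply, h]
    rw [Finset.sum_product]
    have hprod : ∀ p1 p2 : ℕ, Set.indicator (I p1 ∩ I p2) (fun _ => (1:ℝ)) u
        = Set.indicator (I p1) (fun _ => (1:ℝ)) u * Set.indicator (I p2) (fun _ => (1:ℝ)) u := by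
      intro p1 p2
      by_cases h1 : u ∈ I p1 <;> by_cases h2 : u ∈ I p2 <;>
        simp [Set.indicator_apply, h1, h2]
    simp only [hprod]
    rw [← Finset.sum_mul_sum, hsum, sq]
  have hmeas : ∀ p : ℕ × ℕ, MeasurableSet (I p.1 ∩ I p.2) := fun p =>
    measurableSet_Ico.inter measurableSet_Ico
  have hfin : ∀ p : ℕ × ℕ, volume (I p.1 ∩ I p.2) < ⊤ := by
    intro p
    exact lt_of_le_of_lt (measure_mono Set.inter_subset_left) measure_Ico_lt_top
  have hint : ∀ p ∈ D ×ˢ D,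
      Integrable (fun u => Set.indicator (I p.1 ∩ I p.2) (fun _ => (1:ℝ)) u) := by
    intro p _
    rw [integrable_indicator_iff (hmeas p)]
    exact (integrableOn_const_iff (C := (1:ℝ))).mpr (Or.inr (hfin p))
  have hWcard : (((D ×ˢ D).filter
      (fun p => |Real.log p.1 - Real.log p.2| ≤ Real.log 2)).card : ℝ) = (W a : ℝ) := by
    congr 1
    rw [W]
    have : {p : ℕ × ℕ | p.1 ∣ a ∧ p.2 ∣ a ∧ |Real.log p.1 - Real.log p.2| ≤ Real.log 2}
        = ↑((D ×ˢ D).filter (fun p => |Real.log p.1 - Real.log p.2| ≤ Real.log 2)) := by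
      ext p
      simp only [Set.mem_setOf_eq, Finset.coe_filter, Finset.mem_product, Nat.mem_divisors, hD]
      constructor
      · rintro ⟨h1, h2, h3⟩
        exact ⟨⟨⟨h1, ha.ne'⟩, ⟨h2, ha.ne'⟩⟩, h3⟩
      · rintro ⟨⟨⟨h1, _⟩, ⟨h2, _⟩⟩, h3⟩
        exact ⟨h1, h2, h3⟩
    rw [this, Set.ncard_coe_finset]
  calc ∫ u : ℝ, ((tauI a (Real.exp u) (2 * Real.exp u) : ℝ)) ^ 2
      = ∫ u : ℝ, ∑ p ∈ D ×ˢ D, Set.indicator (I p.1 ∩ I p.2) (fun _ => (1:ℝ)) u :=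
        integral_congr_ae (Filter.Eventually.of_forall hpoint)
    _ = ∑ p ∈ D ×ˢ D, ∫ u : ℝ, Set.indicator (I p.1 ∩ I p.2) (fun _ => (1:ℝ)) u :=
        integral_finset_sum _ hint
    _ = ∑ p ∈ D ×ˢ D, (volume (I p.1 ∩ I p.2)).toReal := by
        refine Finset.sum_congr rfl fun p _ => ?_
        rw [integral_indicator_const (1:ℝ) (hmeas p), smul_eq_mul, mul_one]
        rfl
    _ ≤ ∑ p ∈ D ×ˢ D, (if |Real.log p.1 - Real.log p.2| ≤ Real.log 2
          then Real.log 2 else 0) := by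
        refine Finset.sum_le_sum fun p _ => ?_
        by_cases h : |Real.log p.1 - Real.log p.2| ≤ Real.log 2
        · rw [if_pos h]
          have h1 : volume (I p.1 ∩ I p.2) ≤ volume (I p.1) :=
            measure_mono Set.inter_subset_left
          have h2 : (volume (I p.1)).toReal = Real.log 2 := by
            simp only [hI, Real.volume_Ico]
            rw [ENNReal.toReal_ofReal_eq_iff.mpr (by linarith)]
            ring
          calc (volume (I p.1 ∩ I p.2)).toReal ≤ (volume (I p.1)).toReal :=
                ENNReal.toReal_mono measure_Ico_lt_top.ne h1
            _ = Real.log 2 := h2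
        · rw [if_neg h]
          push_neg at h
          have hempty : I p.1 ∩ I p.2 = ∅ := by
            simp only [hI, Set.Ico_inter_Ico]
            apply Set.Ico_eq_empty
            intro hc
            rcases lt_abs.mp h with h' | h'
            · linarith [lt_of_le_of_lt (le_max_left (Real.log p.1 - Real.log 2)
                (Real.log p.2 - Real.log 2)) hc, min_le_right (Real.log p.1) (Real.log p.2)]
            · linarith [lt_of_le_of_lt (le_max_right (Real.log p.1 - Real.log 2)
                (Real.log p.2 - Real.log 2)) hc, min_le_left (Real.log p.1) (Real.log p.2)]
          rw [hempty]
          simp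
    _ = Real.log 2 * (((D ×ˢ D).filter
          (fun p => |Real.log p.1 - Real.log p.2| ≤ Real.log 2)).card : ℝ) := by
        rw [← Finset.sum_filter, Finset.sum_const, nsmul_eq_mul, mul_comm]
    _ = Real.log 2 * (W a : ℝ) := by rw [hWcard]
    _ ≤ 4 * Real.log 2 * (W a : ℝ) := by
        nlinarith [mul_nonneg hlog2.le (Nat.cast_nonneg (W a) : (0:ℝ) ≤ (W a : ℝ))]
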